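/- Fix N ≥ 1, positive reals (a_k)_{k≥1}, integers 0 = M_0 < M_1 < … < M_q < M_{q+1} = N+1, reals δ_0,…,δ_q > 0, and nonnegative integers L_0,…,L_q and N_0,…,N_q with Σ_{j=0}^q N_j = N. For j = 0,…,q put S_j* = Σ_{k=max(M_j,1)}^{M_{j+1}−1} a_k·e^{−δ_j·k}, and let Y^{(j)} be the sum of L_j i.i.d. random variables, each taking the value k ∈ {max(M_j,1),…,M_{j+1}−1} with probability a_k·e^{−δ_j·k}/S_j* (with Y^{(j)} = 0 when L_j = 0), the Y^{(0)},…,Y^{(q)} being independent. Then μ_N{η ∈ Ω_N : ν_j*(η) = L_j and K_j*(η) = N_j for all j = 0,…,q} = c_N^{−1}·∏_{j=0}^q [ (S_j*)^{L_j}/(L_j)! · e^{δ_j·N_j} · P(Y^{(j)} = N_j) ]. -/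

import Mathlib

open scoped Classical BigOperators Topology
open Filter MeasureTheory ProbabilityTheory Finset

noncomputable section

/-- `pc η k` is `n_k(η)`, the number of parts of size `k` in the partition `η`. -/
def pc {N : ℕ} (η : Nat.Partition N) (k : ℕ) : ℕ := Multiset.count k η.parts

/-- probability of the set of partitions satisfying `P` under the mass function `μ`. -/
def prob {N : ℕ} (μ : Nat.Partition N → ℝ) (P : Nat.Partition N → Prop) : ℝ :=
  ∑ η ∈ Finset.univ.filter P, μ η

/-- the Gibbs weight `∏_{k=1}^N a_k^{n_k}/n_k!` of a partition. -/
def wgt (a : ℕ → ℝ) (N : ℕ) (η : Nat.Partition N) : ℝ :=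
  ∏ k ∈ Finset.Icc 1 N, a k ^ pc η k / (Nat.factorial (pc η k) : ℝ)

/-- the partition function `c_N`. -/
def cN (a : ℕ → ℝ) (N : ℕ) : ℝ := ∑ η : Nat.Partition N, wgt a N η

/-- the Gibbs measure `μ_N` with parameter function `a`. -/
def gibbs (a : ℕ → ℝ) (N : ℕ) (η : Nat.Partition N) : ℝ := (cN a N)⁻¹ * wgt a N η

/-- `ν* η = Σ_{k=m}^{m'-1} n_k(η)`. -/
def nust {N : ℕ} (m m' : ℕ) (η : Nat.Partition N) : ℕ :=
  ∑ k ∈ Finset.Ico m m', pc η k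

/-- `K* η = Σ_{k=m}^{m'-1} k·n_k(η)`. -/
def Kst {N : ℕ} (m m' : ℕ) (η : Nat.Partition N) : ℕ :=
  ∑ k ∈ Finset.Ico m m', k * pc η k

/-- `S* = Σ_{k=max(m,1)}^{m'-1} a_k e^{-d·k}`. -/
def Sst (a : ℕ → ℝ) (d : ℝ) (m m' : ℕ) : ℝ :=
  ∑ k ∈ Finset.Ico (max m 1) m', a k * Real.exp (-d * (k : ℝ))

/-- `E* = Σ_{k=max(m,1)}^{m'-1} k·a_k e^{-d·k}`. -/
def Est (a : ℕ → ℝ) (d : ℝ) (m m' : ℕ) : ℝ :=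
  ∑ k ∈ Finset.Ico (max m 1) m', (k : ℝ) * a k * Real.exp (-d * (k : ℝ))

/-- `V* = Σ_{k=max(m,1)}^{m'-1} k²·a_k e^{-d·k}`. -/
def Vst (a : ℕ → ℝ) (d : ℝ) (m m' : ℕ) : ℝ :=
  ∑ k ∈ Finset.Ico (max m 1) m', (k : ℝ) ^ 2 * a k * Real.exp (-d * (k : ℝ))

/-- the mass function of `β^{(j)}`: `P(β = k) = a_k e^{-d·k}/S*` for `max(m,1) ≤ k < m'`. -/
def pmfY (a : ℕ → ℝ) (d : ℝ) (m m' : ℕ) (k : ℕ) : ℝ :=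
  if k ∈ Finset.Ico (max m 1) m' then a k * Real.exp (-d * (k : ℝ)) / Sst a d m m' else 0

/-- `convPow f n m` is `P(X₁ + ⋯ + Xₙ = m)` for i.i.d. `ℕ`-valued `Xᵢ` with mass function `f`
(equal to the indicator of `m = 0` when `n = 0`). -/
def convPow (f : ℕ → ℝ) : ℕ → ℕ → ℝ
  | 0, m => if m = 0 then 1 else 0
  | n + 1, m => ∑ i ∈ Finset.range (m + 1), f i * convPow f n (m - i)


/-! ### Auxiliary lemmas -/

lemma convPow_succ (f : ℕ → ℝ) (n m : ℕ) :
    convPow f (n+1) m = ∑ i ∈ Finset.range (m + 1), f i * convPow f n (m - i) := rfl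

open Polynomial in
lemma coeff_base (f : ℕ → ℝ) (s : Finset ℕ) (hf : ∀ k, k ∉ s → f k = 0) (i : ℕ) :
    (∑ k ∈ s, C (f k) * X ^ k).coeff i = f i := by
  rw [finset_sum_coeff]
  simp only [coeff_C_mul, coeff_X_pow, mul_ite, mul_one, mul_zero]
  rw [Finset.sum_ite_eq s i f]
  by_cases h : i ∈ s
  · simp [h]
  · simp [h, hf i h]

open Polynomial in
lemma convPow_coeff (f : ℕ → ℝ) (s : Finset ℕ) (hf : ∀ k, k ∉ s → f k = 0) :
    ∀ n m, convPow f n m = ((∑ k ∈ s, C (f k) * X ^ k) ^ n).coeff m := by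
  intro n
  induction n with
  | zero => intro m; simp [convPow, coeff_one, eq_comm]
  | succ n ih =>
    intro m
    rw [convPow_succ, pow_succ']
    rw [coeff_mul, Finset.Nat.sum_antidiagonal_eq_sum_range_succ_mk]
    refine Finset.sum_congr rfl fun i _ => ?_
    rw [coeff_base f s hf, ih]

open Polynomial in
lemma coeff_pow_eq (f : ℕ → ℝ) (s : Finset ℕ) (L m : ℕ) :
    ((∑ k ∈ s, C (f k) * X ^ k) ^ L).coeff m
      = ∑ n ∈ (s.piAntidiag L).filter (fun n => ∑ k ∈ s, k * n k = m),
          (Nat.multinomial s n : ℝ) * ∏ k ∈ s, f k ^ n k := by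
  rw [Finset.sum_pow_eq_sum_piAntidiag, finset_sum_coeff, Finset.sum_filter]
  refine Finset.sum_congr rfl fun n _ => ?_
  have h1 : ∏ k ∈ s, (C (f k) * X ^ k) ^ n k
      = C (∏ k ∈ s, f k ^ n k) * X ^ (∑ k ∈ s, k * n k) := by
    simp_rw [mul_pow, ← C_pow, ← pow_mul]
    rw [Finset.prod_mul_distrib, ← map_prod, Finset.prod_pow_eq_pow_sum]
  rw [h1, ← mul_assoc, ← C_eq_natCast, ← C_mul, coeff_C_mul, coeff_X_pow]
  rcases eq_or_ne (∑ k ∈ s, k * n k) m with h | h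
  · simp [h]
  · simp [h, Ne.symm h]

lemma convPow_smul (f : ℕ → ℝ) (c : ℝ) :
    ∀ n m, convPow (fun k => c * f k) n m = c ^ n * convPow f n m := by
  intro n
  induction n with
  | zero => intro m; simp [convPow]
  | succ n ih =>
    intro m
    rw [convPow_succ, convPow_succ, Finset.mul_sum]
    refine Finset.sum_congr rfl fun i _ => ?_
    rw [ih]; ring


def Wt (a : ℕ → ℝ) (m m' L N' : ℕ) : ℝ :=
  ∑ n ∈ ((Finset.Ico (max m 1) m').piAntidiag L).filter
      (fun n => ∑ k ∈ Finset.Ico (max m 1) m', k * n k = N'),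
    ∏ k ∈ Finset.Ico (max m 1) m', a k ^ n k / (Nat.factorial (n k) : ℝ)


lemma key (a : ℕ → ℝ) (ha : ∀ k, 0 < a k) (d : ℝ) (m m' L N' : ℕ) :
    Sst a d m m' ^ L / (Nat.factorial L : ℝ) * Real.exp (d * (N' : ℝ)) *
      convPow (pmfY a d m m') L N' = Wt a m m' L N' := by
  set s := Finset.Ico (max m 1) m' with hs
  rcases Finset.eq_empty_or_nonempty s with hse | hne
  · -- empty block
    have hS : Sst a d m m' = 0 := by rw [Sst, ← hs, hse, Finset.sum_empty]
    rw [Wt, ← hs, hse]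
    rcases Nat.eq_zero_or_pos L with hL | hL
    · subst hL
      rcases eq_or_ne N' 0 with hN | hN
      · subst hN
        simp [convPow, Finset.piAntidiag_zero]
      · simp [convPow, hN, Finset.piAntidiag_empty_of_ne_zero, Ne.symm hN]
    · rw [hS, zero_pow (Nat.pos_iff_ne_zero.mp hL)]
      rw [Finset.piAntidiag_empty_of_ne_zero (Nat.pos_iff_ne_zero.mp hL)]
      simp
      norm_cast
  · -- nonempty block
    have hS : 0 < Sst a d m m' := by
      rw [Sst, ← hs]
      exact Finset.sum_pos (fun k _ => mul_pos (ha k) (Real.exp_pos _)) hne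
    set f : ℕ → ℝ := fun k => if k ∈ s then a k * Real.exp (-d * (k : ℝ)) else 0 with hf
    have hpmf : pmfY a d m m' = fun k => (Sst a d m m')⁻¹ * f k := by
      funext k
      rw [pmfY, hf, ← hs]
      by_cases h : k ∈ s
      · simp [h, div_eq_inv_mul]
      · simp [h]
    rw [hpmf, convPow_smul, convPow_coeff f s (fun k hk => by simp [hf, hk]),
      coeff_pow_eq]
    rw [Finset.mul_sum, Finset.mul_sum, Wt, ← hs]
    refine Finset.sum_congr rfl fun n hn => ?_
    obtain ⟨hn1, hn2⟩ := Finset.mem_filter.mp hn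
    obtain ⟨hsum, -⟩ := Finset.mem_piAntidiag.mp hn1
    -- ∏ f k ^ n k = (∏ a k ^ n k) * exp (-d * N')
    have hprod : ∏ k ∈ s, f k ^ n k
        = (∏ k ∈ s, a k ^ n k) * Real.exp (-d * (N' : ℝ)) := by
      have : ∀ k ∈ s, f k ^ n k = a k ^ n k * Real.exp (-d * (k : ℝ) * n k) := by
        intro k hk
        rw [hf]
        simp only [hk, if_true, mul_pow]
        rw [← Real.exp_nat_mul]
        ring_nf
      rw [Finset.prod_congr rfl this, Finset.prod_mul_distrib, ← Real.exp_sum]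
      congr 2
      rw [← hn2]
      push_cast
      rw [Finset.mul_sum]
      exact Finset.sum_congr rfl fun k _ => by ring
    rw [hprod]
    -- now algebra with factorials
    have hfac : (Nat.multinomial s n : ℝ) * ∏ k ∈ s, (Nat.factorial (n k) : ℝ)
        = (Nat.factorial L : ℝ) := by
      rw [← Nat.cast_prod, ← Nat.cast_mul, mul_comm, Nat.multinomial_spec, hsum]
    have hfacpos : (0:ℝ) < ∏ k ∈ s, (Nat.factorial (n k) : ℝ) :=
      Finset.prod_pos fun k _ => by positivity
    have hLfac : (0:ℝ) < (Nat.factorial L : ℝ) := by positivity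
    rw [Finset.prod_div_distrib]
    have hSL : Sst a d m m' ^ L * ((Sst a d m m')⁻¹) ^ L = 1 := by
      rw [← mul_pow, mul_inv_cancel₀ (ne_of_gt hS), one_pow]
    have hexp : Real.exp (d * (N' : ℝ)) * Real.exp (-d * (N' : ℝ)) = 1 := by
      rw [← Real.exp_add]; ring_nf; exact Real.exp_zero
    have h1 : Sst a d m m' ^ L / (Nat.factorial L : ℝ) * Real.exp (d * (N' : ℝ)) *
        ((Sst a d m m')⁻¹ ^ L * ((Nat.multinomial s n : ℝ) *
          ((∏ k ∈ s, a k ^ n k) * Real.exp (-d * (N' : ℝ)))))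
        = (Nat.multinomial s n : ℝ) * (∏ k ∈ s, a k ^ n k) / (Nat.factorial L : ℝ) := by
      calc Sst a d m m' ^ L / (Nat.factorial L : ℝ) * Real.exp (d * (N' : ℝ)) *
            ((Sst a d m m')⁻¹ ^ L * ((Nat.multinomial s n : ℝ) *
              ((∏ k ∈ s, a k ^ n k) * Real.exp (-d * (N' : ℝ)))))
          = (Sst a d m m' ^ L * (Sst a d m m')⁻¹ ^ L) *
              (Real.exp (d * (N' : ℝ)) * Real.exp (-d * (N' : ℝ))) *
              ((Nat.multinomial s n : ℝ) * (∏ k ∈ s, a k ^ n k) / (Nat.factorial L : ℝ)) := by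
            ring
        _ = _ := by rw [hSL, hexp]; ring
    rw [h1, div_eq_div_iff (ne_of_gt hLfac) (ne_of_gt hfacpos)]
    calc (Nat.multinomial s n : ℝ) * (∏ k ∈ s, a k ^ n k) * ∏ k ∈ s, (Nat.factorial (n k) : ℝ)
        = (∏ k ∈ s, a k ^ n k) * ((Nat.multinomial s n : ℝ) * ∏ k ∈ s, (Nat.factorial (n k) : ℝ)) := by
          ring
      _ = _ := by rw [hfac]


lemma pc_zero {N : ℕ} (η : Nat.Partition N) : pc η 0 = 0 :=
  Multiset.count_eq_zero.2 fun h => lt_irrefl 0 (η.parts_pos h)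

lemma pc_large {N : ℕ} (η : Nat.Partition N) {k : ℕ} (hk : N < k) : pc η k = 0 := by
  refine Multiset.count_eq_zero.2 fun h => absurd ?_ (not_le.2 hk)
  calc k ≤ η.parts.sum := Multiset.single_le_sum (fun x _ => Nat.zero_le x) _ h
    _ = N := η.parts_sum

lemma sum_Ico_max1 {M : Type*} [AddCommMonoid M] (g : ℕ → M) (hg : g 0 = 0) (m m' : ℕ) :
    ∑ k ∈ Finset.Ico (max m 1) m', g k = ∑ k ∈ Finset.Ico m m', g k := by
  refine Finset.sum_subset (Finset.Ico_subset_Ico (le_max_left m 1) le_rfl) ?_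
  intro k hk hk'
  rw [Finset.mem_Ico] at hk
  simp only [Finset.mem_Ico, not_and, not_lt] at hk'
  have h1 : k = 0 := by omega
  rw [h1, hg]

lemma Mmono (M : ℕ → ℕ) (q : ℕ) (h : ∀ j, j ≤ q → M j < M (j+1)) :
    ∀ i j, i ≤ j → j ≤ q + 1 → M i ≤ M j := by
  intro i j hij hj
  induction j with
  | zero => simp_all
  | succ j ih =>
    rcases Nat.lt_succ_iff_lt_or_eq.mp (Nat.lt_succ_of_le hij) with h1 | h1
    · exact (ih (Nat.lt_succ_iff.mp h1) (Nat.le_of_succ_le hj)).trans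
        (le_of_lt (h j (Nat.succ_le_succ_iff.mp hj)))
    · rw [h1]

lemma blocks_cover (M : ℕ → ℕ) (q : ℕ) (hM0 : M 0 = 0)
    (hMlt : ∀ j, j ≤ q → M j < M (j+1)) :
    (Finset.range (q+1)).biUnion (fun j => Finset.Ico (max (M j) 1) (M (j+1)))
      = Finset.Ico 1 (M (q+1)) := by
  induction q with
  | zero => simp [Finset.range_one, hM0]
  | succ q ih =>
    rw [Finset.range_add_one, Finset.biUnion_insert,
      ih (fun j hj => hMlt j (Nat.le_succ_of_le hj))]
    have h1 : 1 ≤ M (q+1) := by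
      have h2 : M 0 < M 1 := hMlt 0 (Nat.zero_le _)
      have h3 : M 1 ≤ M (q+1) :=
        Mmono M (q+1) hMlt 1 (q+1) (Nat.one_le_iff_ne_zero.mpr (Nat.succ_ne_zero q))
          (Nat.le_succ _)
      omega
    rw [max_eq_left h1, Finset.union_comm,
      Finset.Ico_union_Ico_eq_Ico h1 (le_of_lt (hMlt (q+1) le_rfl))]

lemma blocks_disj (M : ℕ → ℕ) (q : ℕ) (hMlt : ∀ j, j ≤ q → M j < M (j+1)) :
    ∀ i ∈ Finset.range (q+1), ∀ j ∈ Finset.range (q+1), i ≠ j →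
      Disjoint (Finset.Ico (max (M i) 1) (M (i+1))) (Finset.Ico (max (M j) 1) (M (j+1))) := by
  have haux : ∀ i j, i < j → j ≤ q →
      Disjoint (Finset.Ico (max (M i) 1) (M (i+1))) (Finset.Ico (max (M j) 1) (M (j+1))) := by
    intro i j hij hj
    refine Finset.disjoint_left.mpr fun k hk hk' => ?_
    rcases Finset.mem_Ico.mp hk with ⟨-, h2⟩
    rcases Finset.mem_Ico.mp hk' with ⟨h3, -⟩
    have h4 : M (i+1) ≤ M j := Mmono M q hMlt (i+1) j hij (hj.trans (Nat.le_succ q))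
    have h5 : M j ≤ max (M j) 1 := le_max_left _ _
    omega
  intro i hi j hj hij
  rcases lt_or_gt_of_ne hij with h | h
  · exact haux i j h (Nat.lt_succ_iff.mp (Finset.mem_range.mp hj))
  · exact (haux j i h (Nat.lt_succ_iff.mp (Finset.mem_range.mp hi))).symm


lemma comb (N q : ℕ) (a : ℕ → ℝ) (M : ℕ → ℕ) (hM0 : M 0 = 0)
    (hMlt : ∀ j, j ≤ q → M j < M (j+1)) (hMtop : M (q+1) = N + 1)
    (L Nv : ℕ → ℕ) (hNv : ∑ j ∈ Finset.range (q + 1), Nv j = N)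
    {inst : DecidablePred (fun η : Nat.Partition N =>
        ∀ j, j ≤ q → nust (M j) (M (j+1)) η = L j ∧ Kst (M j) (M (j+1)) η = Nv j)} :
    ∑ η ∈ @Finset.filter _ (fun η : Nat.Partition N =>
        ∀ j, j ≤ q → nust (M j) (M (j+1)) η = L j ∧ Kst (M j) (M (j+1)) η = Nv j) inst Finset.univ,
      wgt a N η
    = ∏ j ∈ Finset.range (q+1), Wt a (M j) (M (j+1)) (L j) (Nv j) := by
  have hcover := blocks_cover M q hM0 hMlt
  have hdisj := blocks_disj M q hMlt
  set B : ℕ → Finset ℕ := fun j => Finset.Ico (max (M j) 1) (M (j+1)) with hB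
  set D : ℕ → Finset (ℕ → ℕ) := fun j =>
    ((B j).piAntidiag (L j)).filter (fun n => ∑ k ∈ B j, k * n k = Nv j) with hD
  have hWt : ∀ j, Wt a (M j) (M (j+1)) (L j) (Nv j)
      = ∑ n ∈ D j, ∏ k ∈ B j, a k ^ n k / (Nat.factorial (n k) : ℝ) := fun j => rfl
  rw [Finset.prod_congr rfl (fun j _ => hWt j), Finset.prod_sum]
  set Pparts : (∀ j ∈ Finset.range (q+1), ℕ → ℕ) → Multiset ℕ := fun p =>
    ∑ j ∈ (Finset.range (q+1)).attach, ∑ k ∈ B j.1, Multiset.replicate (p j.1 j.2 k) k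
    with hPparts
  have hpos : ∀ p, ∀ {x : ℕ}, x ∈ Pparts p → 0 < x := by
    intro p x hx
    rcases Multiset.mem_sum.mp hx with ⟨j, hj, hx2⟩
    rcases Multiset.mem_sum.mp hx2 with ⟨k, hk, hx3⟩
    rw [Multiset.eq_of_mem_replicate hx3]
    have := (Finset.mem_Ico.mp hk).1
    omega
  have hcount : ∀ p k0, Multiset.count k0 (Pparts p)
      = ∑ j ∈ (Finset.range (q+1)).attach, if k0 ∈ B j.1 then p j.1 j.2 k0 else 0 := by
    intro p k0
    rw [hPparts]
    rw [Multiset.count_sum']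
    refine Finset.sum_congr rfl fun j _ => ?_
    rw [Multiset.count_sum']
    simp only [Multiset.count_replicate]
    exact Finset.sum_ite_eq' (B j.1) k0 (p j.1 j.2)
  have hcount_in : ∀ p, ∀ j0 (hj0 : j0 ∈ Finset.range (q+1)), ∀ k0 ∈ B j0,
      Multiset.count k0 (Pparts p) = p j0 hj0 k0 := by
    intro p j0 hj0 k0 hk0
    rw [hcount]
    rw [Finset.sum_eq_single_of_mem ⟨j0, hj0⟩ (Finset.mem_attach _ _)]
    · rw [if_pos hk0]
    · intro b _ hb
      rw [if_neg]
      intro hk0'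
      have hne : b.1 ≠ j0 := fun h => hb (Subtype.ext h)
      exact (Finset.disjoint_left.mp (hdisj b.1 b.2 j0 hj0 hne) hk0') hk0
  have hcount_out : ∀ p k0, k0 ∉ Finset.Ico 1 (M (q+1)) →
      Multiset.count k0 (Pparts p) = 0 := by
    intro p k0 hk0
    rw [hcount]
    refine Finset.sum_eq_zero fun j _ => ?_
    rw [if_neg]
    intro hk
    exact hk0 (hcover ▸ Finset.mem_biUnion.mpr ⟨j.1, j.2, hk⟩)
  have hsum : ∀ p ∈ (Finset.range (q+1)).pi D, (Pparts p).sum = N := by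
    intro p hp
    rw [hPparts, Multiset.sum_sum]
    have hx : ∀ j ∈ (Finset.range (q+1)).attach,
        (∑ k ∈ B j.1, Multiset.replicate (p j.1 j.2 k) k).sum = Nv j.1 := by
      intro j _
      rw [Multiset.sum_sum]
      have hpj := Finset.mem_pi.mp hp j.1 j.2
      rw [hD] at hpj
      have h2 := (Finset.mem_filter.mp hpj).2
      calc ∑ k ∈ B j.1, (Multiset.replicate (p j.1 j.2 k) k).sum
          = ∑ k ∈ B j.1, k * p j.1 j.2 k := by
            refine Finset.sum_congr rfl fun k _ => ?_
            rw [Multiset.sum_replicate, smul_eq_mul, mul_comm]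
        _ = Nv j.1 := h2
    rw [Finset.sum_congr rfl hx, ← hNv]
    exact Finset.sum_attach _ _
  have hpc_in : ∀ p (hp : p ∈ (Finset.range (q+1)).pi D),
      ∀ j0 (hj0 : j0 ∈ Finset.range (q+1)), ∀ k0 ∈ B j0,
      pc (⟨Pparts p, hpos p, hsum p hp⟩ : Nat.Partition N) k0 = p j0 hj0 k0 :=
    fun p _ j0 hj0 k0 hk0 => hcount_in p j0 hj0 k0 hk0
  refine Finset.sum_bij'
      (i := fun η _ => fun j _ => fun k => if k ∈ B j then pc η k else 0)
      (j := fun p hp => ⟨Pparts p, hpos p, hsum p hp⟩)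
      ?_ ?_ ?_ ?_ ?_
  · -- hi : image in pi set
    intro η hη
    have hP := (Finset.mem_filter.mp hη).2
    rw [Finset.mem_pi]
    intro j hj
    have hjq : j ≤ q := Nat.lt_succ_iff.mp (Finset.mem_range.mp hj)
    obtain ⟨hnu, hK⟩ := hP j hjq
    rw [hD, Finset.mem_filter, Finset.mem_piAntidiag]
    refine ⟨⟨?_, ?_⟩, ?_⟩
    · have he : ∑ k ∈ B j, (if k ∈ B j then pc η k else 0) = ∑ k ∈ B j, pc η k :=
        Finset.sum_congr rfl fun k hk => if_pos hk
      rw [he, ← hnu]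
      exact sum_Ico_max1 (fun k => pc η k) (pc_zero η) (M j) (M (j+1))
    · intro k hk
      by_cases hkB : k ∈ B j
      · exact hkB
      · simp [hkB] at hk
    · have he : ∑ k ∈ B j, k * (if k ∈ B j then pc η k else 0)
          = ∑ k ∈ B j, k * pc η k :=
        Finset.sum_congr rfl fun k hk => by rw [if_pos hk]
      rw [he, ← hK]
      exact sum_Ico_max1 (fun k => k * pc η k) (by simp [pc_zero]) (M j) (M (j+1))
  · -- hj : preimage in filter set
    intro p hp
    rw [Finset.mem_filter]
    refine ⟨Finset.mem_univ _, ?_⟩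
    intro j hjq
    have hj : j ∈ Finset.range (q+1) := Finset.mem_range.mpr (Nat.lt_succ_of_le hjq)
    have hpj := Finset.mem_pi.mp hp j hj
    rw [hD, Finset.mem_filter, Finset.mem_piAntidiag] at hpj
    obtain ⟨⟨hsumL, hsupp⟩, hsumN⟩ := hpj
    constructor
    · rw [nust, ← sum_Ico_max1
        (fun k => pc (⟨Pparts p, hpos p, hsum p hp⟩ : Nat.Partition N) k)
        (pc_zero _) (M j) (M (j+1)), ← hsumL]
      exact Finset.sum_congr rfl fun k hk => hpc_in p hp j hj k hk
    · rw [Kst, ← sum_Ico_max1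
        (fun k => k * pc (⟨Pparts p, hpos p, hsum p hp⟩ : Nat.Partition N) k)
        (by simp [pc_zero]) (M j) (M (j+1)), ← hsumN]
      exact Finset.sum_congr rfl fun k hk => by rw [hpc_in p hp j hj k hk]
  · -- left inverse
    intro η hη
    apply Nat.Partition.ext
    dsimp only
    apply Multiset.ext.mpr
    intro k0
    by_cases hk0 : k0 ∈ Finset.Ico 1 (M (q+1))
    · rw [← hcover] at hk0
      rcases Finset.mem_biUnion.mp hk0 with ⟨j0, hj0, hk⟩
      have hc := hcount_in (fun j _ k => if k ∈ B j then pc η k else 0) j0 hj0 k0 hk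
      rw [hc]
      rw [if_pos hk]
      rfl
    · have hc := hcount_out (fun j _ k => if k ∈ B j then pc η k else 0) k0 hk0
      rw [hc]
      symm
      rw [Finset.mem_Ico, not_and_or, not_le, not_lt, hMtop] at hk0
      rcases hk0 with h | h
      · have hz : k0 = 0 := by omega
        rw [hz]; exact pc_zero η
      · exact pc_large η (by omega)
  · -- right inverse
    intro p hp
    funext j hj k
    by_cases hk : k ∈ B j
    · rw [if_pos hk]
      exact hpc_in p hp j hj k hk
    · rw [if_neg hk]
      have hpj := Finset.mem_pi.mp hp j hj
      rw [hD, Finset.mem_filter, Finset.mem_piAntidiag] at hpj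
      by_contra h
      exact hk (hpj.1.2 k (Ne.symm h))
  · -- weights agree
    intro η hη
    dsimp only
    have h1 : ∀ x : {x // x ∈ Finset.range (q+1)},
        (∏ k ∈ B x.1, a k ^ (if k ∈ B x.1 then pc η k else 0) /
          (Nat.factorial (if k ∈ B x.1 then pc η k else 0) : ℝ))
        = ∏ k ∈ B x.1, a k ^ pc η k / (Nat.factorial (pc η k) : ℝ) :=
      fun x => Finset.prod_congr rfl fun k hk => by rw [if_pos hk]
    rw [Finset.prod_congr rfl (fun x _ => h1 x),
      Finset.prod_attach (Finset.range (q+1))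
        (fun j => ∏ k ∈ B j, a k ^ pc η k / (Nat.factorial (pc η k) : ℝ)),
      ← Finset.prod_biUnion (fun i hi j hj hij =>
        hdisj i (Finset.mem_coe.mp hi) j (Finset.mem_coe.mp hj) hij),
      hcover, hMtop, Finset.Ico_add_one_right_eq_Icc]
    rfl


/-- Khintchine-type representation formula for the joint distribution of the
stratified counts `ν_j*` and masses `K_j*` under the Gibbs measure. -/
theorem stmt4 (N q : ℕ) (hN : 1 ≤ N)
    (a : ℕ → ℝ) (ha : ∀ k, 0 < a k)
    (M : ℕ → ℕ) (hM0 : M 0 = 0) (hMlt : ∀ j, j ≤ q → M j < M (j + 1))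
    (hMtop : M (q + 1) = N + 1)
    (δ : ℕ → ℝ) (hδ : ∀ j, j ≤ q → 0 < δ j)
    (L Nv : ℕ → ℕ) (hNv : ∑ j ∈ Finset.range (q + 1), Nv j = N) :
    prob (gibbs a N) (fun η =>
        ∀ j, j ≤ q → nust (M j) (M (j + 1)) η = L j ∧ Kst (M j) (M (j + 1)) η = Nv j)
      = (cN a N)⁻¹ * ∏ j ∈ Finset.range (q + 1),
          (Sst a (δ j) (M j) (M (j + 1)) ^ L j / (Nat.factorial (L j) : ℝ) *
            Real.exp (δ j * (Nv j : ℝ)) *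
            convPow (pmfY a (δ j) (M j) (M (j + 1))) (L j) (Nv j)) := by
  
  have hkey : ∀ j ∈ Finset.range (q+1),
      Sst a (δ j) (M j) (M (j + 1)) ^ L j / (Nat.factorial (L j) : ℝ) *
          Real.exp (δ j * (Nv j : ℝ)) *
          convPow (pmfY a (δ j) (M j) (M (j + 1))) (L j) (Nv j)
        = Wt a (M j) (M (j+1)) (L j) (Nv j) :=
    fun j _ => key a ha (δ j) (M j) (M (j+1)) (L j) (Nv j)
  unfold prob gibbs
  rw [← Finset.mul_sum, Finset.prod_congr rfl hkey]
  congr 1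
  exact comb N q a M hM0 hMlt hMtop L Nv hNv
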